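/- arXiv:2207.09916 — 3 statements merged into one kernel-verified Lean document; each statement's English description precedes it below -/
import Mathlib

section
/- If n clients independently apply the scalar PBM with common parameters (m, θ) to inputs x₁,…,xₙ ∈ [−c,c], then \hat{μ} = (c/(nmθ))(∑ᵢ Zᵢ − mn/2) is an unbiased estimator of μ = (1/n)∑ᵢ xᵢ with variance at most c²/(4nmθ²). -/
open Finset

lemma bern_eval (m k : ℕ) (p : ℝ) :
    (bernsteinPolynomial ℝ m k).eval p = (m.choose k : ℝ) * p^k * (1-p)^(m-k) := by
  simp [bernsteinPolynomial]

lemma b0 (m : ℕ) (p : ℝ) :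
    ∑ k ∈ range (m+1), (m.choose k : ℝ) * p^k * (1-p)^(m-k) = 1 := by
  have h := congrArg (Polynomial.eval p) (bernsteinPolynomial.sum ℝ m)
  simpa [Polynomial.eval_finset_sum, bern_eval] using h

lemma b1 (m : ℕ) (p : ℝ) :
    ∑ k ∈ range (m+1), (m.choose k : ℝ) * p^k * (1-p)^(m-k) * k = m * p := by
  have h := congrArg (Polynomial.eval p) (bernsteinPolynomial.sum_smul ℝ m)
  simp [Polynomial.eval_finset_sum, bern_eval] at h
  rw [← h]
  exact Finset.sum_congr rfl fun k _ => by ring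

lemma b2 (m : ℕ) (p : ℝ) :
    ∑ k ∈ range (m+1), (m.choose k : ℝ) * p^k * (1-p)^(m-k) * ((k:ℝ)^2 - k)
      = ((m:ℝ)^2 - m) * p^2 := by
  have h := congrArg (Polynomial.eval p) (bernsteinPolynomial.sum_mul_smul ℝ m)
  simp [Polynomial.eval_finset_sum, bern_eval] at h
  have c2 : ∀ k : ℕ, (k:ℝ) * ((k-1 : ℕ):ℝ) = (k:ℝ)^2 - k := fun k => by
    cases k <;> push_cast <;> ring
  rw [show ((m:ℝ)^2 - m) * p^2 = (m:ℝ) * ((m-1:ℕ):ℝ) * p^2 by rw [c2], ← h]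
  exact Finset.sum_congr rfl fun k _ => by rw [show ((k:ℝ)^2 - k) = (k:ℝ)*((k-1:ℕ):ℝ) from (c2 k).symm]; ring

lemma bVar (m : ℕ) (p : ℝ) :
    ∑ k ∈ range (m+1), (m.choose k : ℝ) * p^k * (1-p)^(m-k) * ((k:ℝ) - m*p)^2
      = m * p * (1-p) := by
  have e : ∀ k ∈ range (m+1),
      (m.choose k : ℝ) * p^k * (1-p)^(m-k) * ((k:ℝ) - m*p)^2
      = (m.choose k : ℝ) * p^k * (1-p)^(m-k) * ((k:ℝ)^2 - k)
        + (1 - 2*m*p) * ((m.choose k : ℝ) * p^k * (1-p)^(m-k) * k)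
        + (m*p)^2 * ((m.choose k : ℝ) * p^k * (1-p)^(m-k)) := fun k _ => by ring
  rw [Finset.sum_congr rfl e, Finset.sum_add_distrib, Finset.sum_add_distrib,
    ← Finset.mul_sum, ← Finset.mul_sum, b0, b1, b2]
  ring

lemma sum_pi_prod {n m : ℕ} (g : Fin n → Fin (m+1) → ℝ) :
    ∑ k : Fin n → Fin (m+1), ∏ i, g i (k i) = ∏ i, ∑ t, g i t := by
  rw [Finset.prod_univ_sum, Fintype.piFinset_univ]

/-- Unbiasedness and variance bound for the `n`-client scalar PBM:
with independent `Zᵢ ~ Binom(m, pᵢ)`, `pᵢ = θ·xᵢ/c + 1/2`, the estimator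
`μ̂ = (c/(nmθ))(∑ᵢ Zᵢ − mn/2)` satisfies `E[μ̂] = μ := (1/n)∑ᵢ xᵢ` and
`Var(μ̂) ≤ c²/(4nmθ²)`. Expectations are written out explicitly over the
joint law of the independent binomials. -/
theorem pbm_mean_estimation
    (c θ : ℝ) (m n : ℕ) (x : Fin n → ℝ)
    (hc : 0 < c) (hθ0 : 0 < θ) (hθ : θ ≤ 1/4) (hm : 1 ≤ m) (hn : 1 ≤ n)
    (hx : ∀ i, |x i| ≤ c) :
    let p : Fin n → ℝ := fun i => θ * x i / c + 1/2
    let B : Fin n → ℕ → ℝ :=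
      fun i k => (m.choose k : ℝ) * (p i) ^ k * (1 - p i) ^ (m - k)
    let est : ℕ → ℝ := fun s => c / (n * m * θ) * ((s : ℝ) - m * n / 2)
    let μ : ℝ := (∑ i, x i) / n
    (∑ k : Fin n → Fin (m + 1),
        (∏ i, B i (k i)) * est (∑ i, (k i : ℕ)) = μ) ∧
    ∑ k : Fin n → Fin (m + 1),
        (∏ i, B i (k i)) * (est (∑ i, (k i : ℕ)) - μ) ^ 2
      ≤ c ^ 2 / (4 * n * m * θ ^ 2) := by
  intro p B est μ
  have hn' : (n:ℝ) ≠ 0 := Nat.cast_ne_zero.mpr (by omega)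
  have hm' : (m:ℝ) ≠ 0 := Nat.cast_ne_zero.mpr (by omega)
  have hθ' : θ ≠ 0 := ne_of_gt hθ0
  have hc' : c ≠ 0 := ne_of_gt hc
  set a : ℝ := c / (n * m * θ) with ha
  -- per-coordinate moments
  have S0 : ∀ i, ∑ t : Fin (m+1), B i (t : ℕ) = 1 := fun i => by
    rw [Fin.sum_univ_eq_sum_range (fun k => B i k)]; exact b0 m (p i)
  have S1 : ∀ i, ∑ t : Fin (m+1), B i (t : ℕ) * (((t:ℕ):ℝ) - m * p i) = 0 := fun i => by
    rw [Fin.sum_univ_eq_sum_range (fun k => B i k * ((k:ℝ) - m * p i))]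
    have e : ∀ k ∈ range (m+1), B i k * ((k:ℝ) - m * p i)
        = B i k * k - (m * p i) * B i k := fun k _ => by ring
    rw [Finset.sum_congr rfl e, Finset.sum_sub_distrib, ← Finset.mul_sum]
    show (∑ k ∈ range (m+1), (m.choose k : ℝ) * (p i)^k * (1-p i)^(m-k) * k) - _ * ∑ k ∈ range (m+1), (m.choose k : ℝ) * (p i)^k * (1-p i)^(m-k) = 0
    rw [b0, b1]; ring
  have S2 : ∀ i, ∑ t : Fin (m+1), B i (t : ℕ) * (((t:ℕ):ℝ) - m * p i)^2
      = m * p i * (1 - p i) := fun i => by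
    rw [Fin.sum_univ_eq_sum_range (fun k => B i k * ((k:ℝ) - m * p i)^2)]
    exact bVar m (p i)
  set E : (Fin n → Fin (m+1)) → ℝ := fun k => ∏ i, B i (k i) with hE
  set Y : Fin n → ℕ → ℝ := fun i t => (t:ℝ) - m * p i with hY
  -- total mass
  have hE1 : ∑ k : Fin n → Fin (m+1), E k = 1 := by
    have h : (∑ k : Fin n → Fin (m+1), ∏ i, B i ((k i : ℕ))) = 1 := by
      rw [sum_pi_prod (fun i t => B i (t : ℕ)),
        Finset.prod_congr rfl fun i _ => S0 i, Finset.prod_const_one]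
    exact h
  -- estimator decomposition
  have hest : ∀ k : Fin n → Fin (m+1),
      est (∑ i, (k i : ℕ)) = μ + a * ∑ i, Y i (k i) := by
    intro k
    have hs : ((∑ i, (k i : ℕ) : ℕ) : ℝ) = ∑ i, ((k i : ℕ) : ℝ) := by push_cast; rfl
    have hsum : ∑ i, Y i (k i)
        = (∑ i, ((k i : ℕ) : ℝ)) - (m*θ/c) * (∑ i, x i) - m*n/2 := by
      simp only [hY, p]
      rw [Finset.sum_sub_distrib]
      have : ∑ i : Fin n, (m:ℝ) * (θ * x i / c + 1/2)
          = (m*θ/c) * (∑ i, x i) + (n:ℝ) * (m/2) := by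
        rw [Finset.sum_congr rfl (fun i _ => show (m:ℝ) * (θ * x i / c + 1/2) = (m*θ/c) * x i + m/2 by field_simp),
          Finset.sum_add_distrib, ← Finset.mul_sum, Finset.sum_const, card_univ, Fintype.card_fin,
          nsmul_eq_mul]
      rw [this]; ring
    simp only [est, μ, ha]
    rw [hs] at *
    rw [hsum]
    field_simp
    ring
  -- cross moments
  have hpair : ∀ i j : Fin n, ∑ k : Fin n → Fin (m+1), E k * (Y i (k i) * Y j (k j))
      = if i = j then (m:ℝ) * p i * (1 - p i) else 0 := by
    intro i j
    have hg : ∀ k : Fin n → Fin (m+1), E k * (Y i (k i) * Y j (k j))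
        = ∏ l, (B l (k l) * (if l = i then Y l (k l) else 1) * (if l = j then Y l (k l) else 1)) := by
      intro k
      rw [Finset.prod_mul_distrib, Finset.prod_mul_distrib,
        Finset.prod_ite_eq' univ i (fun l => Y l (k l)),
        Finset.prod_ite_eq' univ j (fun l => Y l (k l))]
      simp only [Finset.mem_univ, if_pos, hE]
      ring
    rw [Finset.sum_congr rfl (fun k _ => hg k),
      sum_pi_prod (fun l t => B l (t : ℕ) * (if l = i then Y l (t : ℕ) else 1) * (if l = j then Y l (t : ℕ) else 1))]
    by_cases hij : i = j
    · subst hij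
      rw [if_pos rfl, Finset.prod_eq_single i]
      · rw [show ∑ t : Fin (m+1), B i (t:ℕ) * (if i = i then Y i (t:ℕ) else 1) * (if i = i then Y i (t:ℕ) else 1) = ∑ t : Fin (m+1), B i (t:ℕ) * (Y i (t:ℕ))^2 from Finset.sum_congr rfl fun t _ => by simp; ring]
        exact S2 i
      · intro l _ hl
        rw [show ∑ t : Fin (m+1), B l (t:ℕ) * (if l = i then Y l (t:ℕ) else 1) * (if l = i then Y l (t:ℕ) else 1) = ∑ t : Fin (m+1), B l (t:ℕ) from Finset.sum_congr rfl fun t _ => by simp [hl]]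
        exact S0 l
      · exact fun h => absurd (Finset.mem_univ i) h
    · rw [if_neg hij]
      apply Finset.prod_eq_zero (Finset.mem_univ i)
      rw [show ∑ t : Fin (m+1), B i (t:ℕ) * (if i = i then Y i (t:ℕ) else 1) * (if i = j then Y i (t:ℕ) else 1) = ∑ t : Fin (m+1), B i (t:ℕ) * Y i (t:ℕ) from Finset.sum_congr rfl fun t _ => by simp [hij]]
      exact S1 i
  have hcross : ∀ i : Fin n, ∑ k : Fin n → Fin (m+1), E k * Y i (k i) = 0 := by
    intro i
    have hg : ∀ k : Fin n → Fin (m+1), E k * Y i (k i)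
        = ∏ l, (B l (k l) * (if l = i then Y l (k l) else 1)) := by
      intro k
      rw [Finset.prod_mul_distrib, Finset.prod_ite_eq' univ i (fun l => Y l (k l))]
      simp only [Finset.mem_univ, if_pos, hE]
    rw [Finset.sum_congr rfl (fun k _ => hg k),
      sum_pi_prod (fun l t => B l (t : ℕ) * (if l = i then Y l (t : ℕ) else 1))]
    apply Finset.prod_eq_zero (Finset.mem_univ i)
    rw [show ∑ t : Fin (m+1), B i (t:ℕ) * (if i = i then Y i (t:ℕ) else 1) = ∑ t : Fin (m+1), B i (t:ℕ) * Y i (t:ℕ) from Finset.sum_congr rfl fun t _ => by simp]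
    exact S1 i
  constructor
  · -- mean
    calc ∑ k : Fin n → Fin (m+1), E k * est (∑ i, (k i : ℕ))
        = ∑ k : Fin n → Fin (m+1), (μ * E k + a * ∑ i, E k * Y i (k i)) := by
          refine Finset.sum_congr rfl fun k _ => ?_
          rw [hest k, ← Finset.mul_sum]
          ring
      _ = μ * (∑ k : Fin n → Fin (m+1), E k)
          + a * ∑ i, ∑ k : Fin n → Fin (m+1), E k * Y i (k i) := by
          rw [Finset.sum_add_distrib, ← Finset.mul_sum, ← Finset.mul_sum, Finset.sum_comm]
      _ = μ := by
          rw [hE1, Finset.sum_congr rfl (fun i _ => hcross i), Finset.sum_const_zero]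
          ring
  · -- variance
    have hvar : ∑ k : Fin n → Fin (m+1), E k * (est (∑ i, (k i : ℕ)) - μ)^2
        = a^2 * ∑ i : Fin n, (m:ℝ) * p i * (1 - p i) := by
      calc ∑ k : Fin n → Fin (m+1), E k * (est (∑ i, (k i : ℕ)) - μ)^2
          = ∑ k : Fin n → Fin (m+1), a^2 * ∑ i, ∑ j, E k * (Y i (k i) * Y j (k j)) := by
            refine Finset.sum_congr rfl fun k _ => ?_
            rw [hest k, show μ + a * ∑ i, Y i (k i) - μ = a * ∑ i, Y i (k i) by ring,
              mul_pow, sq (∑ i, Y i (k i)), Finset.sum_mul_sum]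
            simp only [Finset.mul_sum]
            exact Finset.sum_congr rfl fun i _ => Finset.sum_congr rfl fun j _ => by ring
        _ = a^2 * ∑ i, ∑ j, ∑ k : Fin n → Fin (m+1), E k * (Y i (k i) * Y j (k j)) := by
            rw [← Finset.mul_sum, Finset.sum_comm]
            congr 1
            exact Finset.sum_congr rfl fun i _ => Finset.sum_comm
        _ = a^2 * ∑ i : Fin n, (m:ℝ) * p i * (1 - p i) := by
            congr 1
            rw [Finset.sum_congr rfl fun i _ => Finset.sum_congr rfl fun j _ => hpair i j]
            exact Finset.sum_congr rfl fun i _ => by rw [Finset.sum_ite_eq _ i]; simp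
    rw [hvar]
    have hbound : ∑ i : Fin n, (m:ℝ) * p i * (1 - p i) ≤ (n:ℝ) * (m/4) := by
      calc ∑ i : Fin n, (m:ℝ) * p i * (1 - p i) ≤ ∑ i : Fin n, (m:ℝ)/4 := by
            refine Finset.sum_le_sum fun i _ => ?_
            have h1 : (0:ℝ) ≤ (p i - 1/2)^2 := sq_nonneg _
            have h2 : (0:ℝ) ≤ m := Nat.cast_nonneg m
            nlinarith
        _ = (n:ℝ) * (m/4) := by
            rw [Finset.sum_const, card_univ, Fintype.card_fin, nsmul_eq_mul]
    have ha2 : 0 ≤ a^2 := sq_nonneg a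
    calc a^2 * ∑ i : Fin n, (m:ℝ) * p i * (1 - p i) ≤ a^2 * ((n:ℝ) * (m/4)) :=
          mul_le_mul_of_nonneg_left hbound ha2
      _ = c ^ 2 / (4 * n * m * θ ^ 2) := by
          rw [ha]; field_simp
end

section
/- Extremal reduction: for α > 1, θ ∈ [0,1/4], and p₁,…,pₙ,p'₁ ∈ [1/2−θ, 1/2+θ], the divergence D_α(P_{X₁+⋯+Xₙ} ‖ P_{X'₁+X₂+⋯+Xₙ}), with Xᵢ ~ Ber(pᵢ) and X'₁ ~ Ber(p'₁) independent, is bounded by the maximum of the same divergence taken over parameter tuples whose entries all lie in the two-point set {1/2−θ, 1/2+θ}. -/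
/-- Convolution of pmfs on `ℕ` (law of the sum of independent variables). -/
def conv (p q : ℕ → ℝ) : ℕ → ℝ := fun n => ∑ k ∈ Finset.range (n + 1), p k * q (n - k)

/-- The pmf of a Bernoulli random variable with parameter `p`, viewed on `ℕ`. -/
def ber (p : ℝ) : ℕ → ℝ := fun k => if k = 0 then 1 - p else if k = 1 then p else 0

/-- The law of the sum of independent variables with the given pmfs. -/
def sumLaw {n : ℕ} (f : Fin n → ℕ → ℝ) : ℕ → ℝ :=
  (List.ofFn f).foldr conv (fun k => if k = 0 then 1 else 0)

/-- Rényi divergence of order `α` between pmfs on `ℕ`. -/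
noncomputable def renyiDiv (α : ℝ) (p q : ℕ → ℝ) : ℝ :=
  (α - 1)⁻¹ * Real.log (∑' n, (p n) ^ α * (q n) ^ (1 - α))

lemma mix_pos {l m a b : ℝ} (hl : 0 ≤ l) (hm : 0 ≤ m) (hlm : l + m = 1)
    (ha : 0 < a) (hb : 0 < b) : 0 < l * a + m * b := by
  have h1 : l * min a b ≤ l * a := mul_le_mul_of_nonneg_left (min_le_left _ _) hl
  have h2 : m * min a b ≤ m * b := mul_le_mul_of_nonneg_left (min_le_right _ _) hm
  have h4 : l * min a b + m * min a b = min a b := by rw [← add_mul, hlm, one_mul]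
  have := lt_min ha hb
  linarith

lemma core_ineq (α : ℝ) (hα : 1 < α) {l m x₁ x₂ y₁ y₂ : ℝ}
    (hl : 0 ≤ l) (hm : 0 ≤ m) (hlm : l + m = 1)
    (hx₁ : 0 < x₁) (hx₂ : 0 < x₂) (hy₁ : 0 < y₁) (hy₂ : 0 < y₂) :
    (l*x₁+m*x₂) ^ α * (l*y₁+m*y₂) ^ (1-α) ≤ l*(x₁^α*y₁^(1-α)) + m*(x₂^α*y₂^(1-α)) := by
  have hα0 : (0:ℝ) < α := by linarith
  have hαne : α ≠ 0 := ne_of_gt hα0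
  set f₁ := x₁ ^ α * y₁ ^ (1-α) with hf₁
  set f₂ := x₂ ^ α * y₂ ^ (1-α) with hf₂
  have hf₁0 : 0 < f₁ := mul_pos (Real.rpow_pos_of_pos hx₁ _) (Real.rpow_pos_of_pos hy₁ _)
  have hf₂0 : 0 < f₂ := mul_pos (Real.rpow_pos_of_pos hx₂ _) (Real.rpow_pos_of_pos hy₂ _)
  set U := l * f₁ + m * f₂ with hUdef
  set Y := l * y₁ + m * y₂ with hYdef
  have hU : 0 < U := mix_pos hl hm hlm hf₁0 hf₂0
  have hY : 0 < Y := mix_pos hl hm hlm hy₁ hy₂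
  -- per-index inequality
  have key : ∀ x y f : ℝ, 0 < x → 0 < y → f = x ^ α * y ^ (1-α) →
      x ≤ U ^ (1/α) * Y ^ (1-1/α) * ((1/α)*(f/U) + (1-1/α)*(y/Y)) := by
    intro x y f hx hy hf
    have hfpos : 0 < f := hf ▸ mul_pos (Real.rpow_pos_of_pos hx _) (Real.rpow_pos_of_pos hy _)
    have amgm := Real.geom_mean_le_arith_mean2_weighted
      (by positivity : (0:ℝ) ≤ 1/α)
      (by rw [sub_nonneg, div_le_one hα0]; linarith : (0:ℝ) ≤ 1-1/α)
      (le_of_lt (div_pos hfpos hU)) (le_of_lt (div_pos hy hY))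
      (by field_simp; ring)
    have hfx : f ^ (1/α) = x * y ^ ((1-α) * (1/α)) := by
      rw [hf, Real.mul_rpow (Real.rpow_nonneg hx.le _) (Real.rpow_nonneg hy.le _),
        ← Real.rpow_mul hx.le, ← Real.rpow_mul hy.le, mul_one_div, div_self hαne,
        Real.rpow_one]
    have hyy : y ^ ((1-α) * (1/α)) * y ^ (1-1/α) = 1 := by
      rw [← Real.rpow_add hy, show (1-α) * (1/α) + (1-1/α) = 0 by field_simp; ring,
        Real.rpow_zero]
    have hlhs : (f/U) ^ (1/α) * (y/Y) ^ (1-1/α) = x / (U ^ (1/α) * Y ^ (1-1/α)) := by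
      rw [Real.div_rpow hfpos.le hU.le, Real.div_rpow hy.le hY.le, div_mul_div_comm, hfx]
      congr 1
      rw [mul_assoc, hyy, mul_one]
    rw [hlhs] at amgm
    have hUY : 0 < U ^ (1/α) * Y ^ (1-1/α) :=
      mul_pos (Real.rpow_pos_of_pos hU _) (Real.rpow_pos_of_pos hY _)
    calc x = (x / (U ^ (1/α) * Y ^ (1-1/α))) * (U ^ (1/α) * Y ^ (1-1/α)) := by field_simp
    _ ≤ ((1/α)*(f/U) + (1-1/α)*(y/Y)) * (U ^ (1/α) * Y ^ (1-1/α)) :=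
        mul_le_mul_of_nonneg_right amgm hUY.le
    _ = U ^ (1/α) * Y ^ (1-1/α) * ((1/α)*(f/U) + (1-1/α)*(y/Y)) := by ring
  have k₁ := key x₁ y₁ f₁ hx₁ hy₁ rfl
  have k₂ := key x₂ y₂ f₂ hx₂ hy₂ rfl
  have hX : l*x₁+m*x₂ ≤ U ^ (1/α) * Y ^ (1-1/α) := by
    have c₁ := mul_le_mul_of_nonneg_left k₁ hl
    have c₂ := mul_le_mul_of_nonneg_left k₂ hm
    have e : l * ((1/α)*(f₁/U) + (1-1/α)*(y₁/Y)) + m * ((1/α)*(f₂/U) + (1-1/α)*(y₂/Y)) = 1 := by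
      have h1 : l*(f₁/U) + m*(f₂/U) = 1 := by
        rw [show l*(f₁/U) + m*(f₂/U) = (l*f₁+m*f₂)/U by ring, ← hUdef, div_self hU.ne']
      have h2 : l*(y₁/Y) + m*(y₂/Y) = 1 := by
        rw [show l*(y₁/Y) + m*(y₂/Y) = (l*y₁+m*y₂)/Y by ring, ← hYdef, div_self hY.ne']
      calc l * ((1/α)*(f₁/U) + (1-1/α)*(y₁/Y)) + m * ((1/α)*(f₂/U) + (1-1/α)*(y₂/Y))
          = (1/α)*(l*(f₁/U) + m*(f₂/U)) + (1-1/α)*(l*(y₁/Y) + m*(y₂/Y)) := by ring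
      _ = 1 := by rw [h1, h2]; ring
    have hsum : l * (U ^ (1/α) * Y ^ (1-1/α) * ((1/α)*(f₁/U) + (1-1/α)*(y₁/Y)))
        + m * (U ^ (1/α) * Y ^ (1-1/α) * ((1/α)*(f₂/U) + (1-1/α)*(y₂/Y)))
        = U ^ (1/α) * Y ^ (1-1/α) := by
      calc l * (U ^ (1/α) * Y ^ (1-1/α) * ((1/α)*(f₁/U) + (1-1/α)*(y₁/Y)))
          + m * (U ^ (1/α) * Y ^ (1-1/α) * ((1/α)*(f₂/U) + (1-1/α)*(y₂/Y)))
          = (U ^ (1/α) * Y ^ (1-1/α)) * (l * ((1/α)*(f₁/U) + (1-1/α)*(y₁/Y))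
            + m * ((1/α)*(f₂/U) + (1-1/α)*(y₂/Y))) := by ring
      _ = U ^ (1/α) * Y ^ (1-1/α) := by rw [e, mul_one]
    linarith
  have hXpos : 0 < l*x₁+m*x₂ := mix_pos hl hm hlm hx₁ hx₂
  have hXα : (l*x₁+m*x₂) ^ α ≤ U * Y ^ (α-1) := by
    calc (l*x₁+m*x₂) ^ α ≤ (U ^ (1/α) * Y ^ (1-1/α)) ^ α :=
          Real.rpow_le_rpow hXpos.le hX hα0.le
    _ = U * Y ^ (α-1) := by
        rw [Real.mul_rpow (Real.rpow_nonneg hU.le _) (Real.rpow_nonneg hY.le _),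
          ← Real.rpow_mul hU.le, ← Real.rpow_mul hY.le,
          show (1/α)*α = 1 by field_simp, show (1-1/α)*α = α-1 by field_simp,
          Real.rpow_one]
  calc (l*x₁+m*x₂) ^ α * Y ^ (1-α) ≤ (U * Y ^ (α-1)) * Y ^ (1-α) :=
        mul_le_mul_of_nonneg_right hXα (Real.rpow_nonneg hY.le _)
  _ = U := by
      rw [mul_assoc, ← Real.rpow_add hY, show α-1+(1-α) = 0 by ring, Real.rpow_zero, mul_one]
lemma sumLaw_zero (f : Fin 0 → ℕ → ℝ) : sumLaw f = fun k => if k = 0 then 1 else 0 := by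
  simp [sumLaw]

lemma sumLaw_succ {k : ℕ} (f : Fin (k+1) → ℕ → ℝ) :
    sumLaw f = conv (f 0) (sumLaw fun i => f i.succ) := by
  simp [sumLaw, List.ofFn_succ]

lemma conv_left_lin (c d : ℝ) (g h q : ℕ → ℝ) (m : ℕ) :
    conv (fun x => c * g x + d * h x) q m = c * conv g q m + d * conv h q m := by
  simp only [conv, add_mul, Finset.sum_add_distrib, Finset.mul_sum]
  congr 1 <;> (apply Finset.sum_congr rfl; intros; ring)

lemma conv_right_lin (c d : ℝ) (g h p : ℕ → ℝ) (m : ℕ) :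
    conv p (fun x => c * g x + d * h x) m = c * conv p g m + d * conv p h m := by
  simp only [conv, mul_add, Finset.sum_add_distrib, Finset.mul_sum]
  congr 1 <;> (apply Finset.sum_congr rfl; intros; ring)

lemma sumLaw_update_lin : ∀ {k : ℕ} (f : Fin k → ℕ → ℝ) (i : Fin k) (c d : ℝ)
    (g h : ℕ → ℝ) (m : ℕ),
    sumLaw (Function.update f i (fun x => c * g x + d * h x)) m
      = c * sumLaw (Function.update f i g) m + d * sumLaw (Function.update f i h) m := by
  intro k
  induction k with
  | zero => exact fun f i => i.elim0
  | succ k ih =>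
    intro f i c d g h m
    induction i using Fin.cases with
    | zero =>
      have tail : ∀ G : ℕ → ℝ, (fun j : Fin k => Function.update f 0 G j.succ)
          = fun j : Fin k => f j.succ := by
        intro G; funext j; exact Function.update_of_ne (Fin.succ_ne_zero j) _ _
      rw [sumLaw_succ, sumLaw_succ, sumLaw_succ, tail, tail, tail,
        Function.update_self, Function.update_self, Function.update_self]
      exact conv_left_lin c d g h _ m
    | succ i =>
      have head : ∀ G : ℕ → ℝ, Function.update f i.succ G 0 = f 0 := by
        intro G; exact Function.update_of_ne (Fin.succ_ne_zero i).symm _ _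
      have tail : ∀ G : ℕ → ℝ, (fun j : Fin k => Function.update f i.succ G j.succ)
          = Function.update (fun j : Fin k => f j.succ) i G := by
        intro G; funext j
        rw [Function.update_apply, Function.update_apply]
        simp [Fin.succ_inj]
      have hpt : sumLaw (Function.update (fun j : Fin k => f j.succ) i (fun x => c * g x + d * h x))
          = fun x => c * sumLaw (Function.update (fun j : Fin k => f j.succ) i g) x
            + d * sumLaw (Function.update (fun j : Fin k => f j.succ) i h) x :=
        funext fun x => ih (fun j => f j.succ) i c d g h x
      rw [sumLaw_succ, sumLaw_succ, sumLaw_succ, tail, tail, tail, head, head, head, hpt]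
      exact conv_right_lin c d _ _ _ m

lemma ber_mix {l m a b : ℝ} (hlm : l + m = 1) :
    ber (l*a+m*b) = fun k => l * ber a k + m * ber b k := by
  funext k
  simp only [ber]
  split_ifs
  · linarith
  · ring
  · ring

lemma update_ber {k : ℕ} (p : Fin k → ℝ) (i : Fin k) (t : ℝ) :
    (fun j => ber (Function.update p i t j)) = Function.update (fun j => ber (p j)) i (ber t) := by
  funext j
  rw [Function.update_apply, Function.update_apply, apply_ite ber]

lemma conv_ber_eq (p : ℝ) (g : ℕ → ℝ) (m : ℕ) :
    conv (ber p) g m = (1-p) * g m + (if m = 0 then 0 else p * g (m-1)) := by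
  cases m with
  | zero => simp [conv, ber]
  | succ m' =>
    cases m' with
    | zero => simp [conv, ber, Finset.sum_range_succ]
    | succ m'' =>
      rw [conv, Finset.sum_range_succ', Finset.sum_range_succ']
      simp [ber]
      ring

lemma sumLaw_ber_props : ∀ {k : ℕ} (f : Fin k → ℝ), (∀ i, 0 < f i ∧ f i < 1) →
    (∀ m, m ≤ k → 0 < sumLaw (fun i => ber (f i)) m)
    ∧ (∀ m, k < m → sumLaw (fun i => ber (f i)) m = 0)
    ∧ (∀ m, 0 ≤ sumLaw (fun i => ber (f i)) m) := by
  intro k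
  induction k with
  | zero =>
    intro f _
    refine ⟨fun m hm => ?_, fun m hm => ?_, fun m => ?_⟩ <;> rw [sumLaw_zero]
    · have : m = 0 := Nat.le_zero.mp hm
      simp [this]
    · show (if m = 0 then (1:ℝ) else 0) = 0
      rw [if_neg (by omega)]
    · positivity
  | succ k ih =>
    intro f hf
    obtain ⟨hpos, hzero, hnn⟩ := ih (fun i => f i.succ) (fun i => hf i.succ)
    have h0 := hf 0
    have heq : ∀ m, sumLaw (fun i => ber (f i)) m
        = (1 - f 0) * sumLaw (fun i : Fin k => ber (f i.succ)) m
          + (if m = 0 then 0 else f 0 * sumLaw (fun i : Fin k => ber (f i.succ)) (m-1)) := by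
      intro m
      rw [sumLaw_succ, conv_ber_eq]
    refine ⟨fun m hm => ?_, fun m hm => ?_, fun m => ?_⟩
    · rw [heq]
      rcases Nat.lt_or_ge m (k+1) with h | h
      · have t1 : 0 < (1 - f 0) * sumLaw (fun i : Fin k => ber (f i.succ)) m :=
          mul_pos (by linarith [h0.2]) (hpos m (by omega))
        have t2 : 0 ≤ (if m = 0 then 0 else f 0 * sumLaw (fun i : Fin k => ber (f i.succ)) (m-1)) := by
          split_ifs
          · exact le_refl _
          · exact mul_nonneg h0.1.le (hnn _)
        linarith
      · have hmk : m = k + 1 := by omega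
        have t1 : 0 ≤ (1 - f 0) * sumLaw (fun i : Fin k => ber (f i.succ)) m :=
          mul_nonneg (by linarith [h0.2]) (hnn _)
        have t2 : 0 < f 0 * sumLaw (fun i : Fin k => ber (f i.succ)) (m-1) :=
          mul_pos h0.1 (hpos (m-1) (by omega))
        rw [if_neg (by omega)]
        linarith
    · rw [heq, hzero m (by omega), if_neg (by omega), hzero (m-1) (by omega)]
      ring
    · rw [heq]
      have t1 : 0 ≤ (1 - f 0) * sumLaw (fun i : Fin k => ber (f i.succ)) m :=
        mul_nonneg (by linarith [h0.2]) (hnn _)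
      have t2 : 0 ≤ (if m = 0 then 0 else f 0 * sumLaw (fun i : Fin k => ber (f i.succ)) (m-1)) := by
        split_ifs
        · exact le_refl _
        · exact mul_nonneg h0.1.le (hnn _)
      linarith
def paramP (n : ℕ) (r : Fin (n+2) → ℝ) : Fin (n+1) → ℝ := fun i => r i.castSucc

def paramQ (n : ℕ) (r : Fin (n+2) → ℝ) : Fin (n+1) → ℝ :=
  fun i => if i = 0 then r (Fin.last (n+1)) else r i.castSucc

lemma dichP (n : ℕ) (r : Fin (n+2) → ℝ) (j : Fin (n+2)) :
    (∀ t₁ t₂, paramP n (Function.update r j t₁) = paramP n (Function.update r j t₂))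
    ∨ ∃ P i₀, ∀ t, paramP n (Function.update r j t) = Function.update P i₀ t := by
  induction j using Fin.lastCases with
  | last =>
    left
    intro t₁ t₂
    funext i
    simp [paramP, Function.update_apply, (Fin.castSucc_lt_last i).ne]
  | cast i₀ =>
    right
    refine ⟨paramP n r, i₀, fun t => funext fun i => ?_⟩
    by_cases h : i = i₀ <;>
      simp [paramP, Function.update_apply, Fin.castSucc_inj, h]

lemma dichQ (n : ℕ) (r : Fin (n+2) → ℝ) (j : Fin (n+2)) :
    (∀ t₁ t₂, paramQ n (Function.update r j t₁) = paramQ n (Function.update r j t₂))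
    ∨ ∃ P i₀, ∀ t, paramQ n (Function.update r j t) = Function.update P i₀ t := by
  induction j using Fin.lastCases with
  | last =>
    right
    refine ⟨paramQ n r, 0, fun t => funext fun i => ?_⟩
    by_cases h : i = 0 <;>
      simp [paramQ, Function.update_apply, (Fin.castSucc_lt_last i).ne, h]
  | cast i₀ =>
    by_cases h0 : i₀ = 0
    · subst h0
      left
      intro t₁ t₂
      funext i
      have hlast : Fin.last (n+1) ≠ Fin.castSucc 0 := by
        simp [Fin.ext_iff]
      by_cases h : i = 0 <;>
        simp [paramQ, Function.update_apply, Fin.castSucc_inj, h, hlast]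
    · right
      refine ⟨paramQ n r, i₀, fun t => funext fun i => ?_⟩
      have hlast : Fin.last (n+1) ≠ Fin.castSucc i₀ := (Fin.castSucc_lt_last i₀).ne'
      by_cases h : i = i₀
      · subst h
        simp [paramQ, Function.update_apply, Fin.castSucc_inj, h0]
      · have h0' : ¬ (0 : Fin (n+1)) = i₀ := fun hh => h0 hh.symm
        by_cases hi : i = 0 <;>
          simp [paramQ, Function.update_apply, Fin.castSucc_inj, h, hi, hlast, h0']

noncomputable def Gfun (n : ℕ) (α : ℝ) (r : Fin (n+2) → ℝ) : ℝ :=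
  ∑ m ∈ Finset.range (n+2),
    (sumLaw fun i => ber (paramP n r i)) m ^ α * (sumLaw fun i => ber (paramQ n r i)) m ^ (1-α)

lemma mix_shape {k : ℕ} (F : ℝ → Fin k → ℝ)
    (hF : (∀ t₁ t₂, F t₁ = F t₂) ∨ ∃ P i₀, ∀ t, F t = Function.update P i₀ t)
    {l m' a b : ℝ} (hlm : l + m' = 1) (x : ℕ) :
    sumLaw (fun i => ber (F (l*a+m'*b) i)) x
      = l * sumLaw (fun i => ber (F a i)) x + m' * sumLaw (fun i => ber (F b i)) x := by
  rcases hF with h | ⟨P, i₀, h⟩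
  · rw [h (l*a+m'*b) a, h b a]
    linear_combination (-(sumLaw (fun i => ber (F a i)) x)) * hlm
  · rw [h (l*a+m'*b), h a, h b, update_ber, update_ber, update_ber, ber_mix hlm]
    exact sumLaw_update_lin _ i₀ l m' (ber a) (ber b) x

lemma param_props (n : ℕ) {a b : ℝ} (h0a : 0 < a) (hb1 : b < 1)
    (s : Fin (n+2) → ℝ) (hs : ∀ j, s j ∈ Set.Icc a b) :
    (∀ i, 0 < paramP n s i ∧ paramP n s i < 1) ∧ (∀ i, 0 < paramQ n s i ∧ paramQ n s i < 1) := by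
  have mem : ∀ j, 0 < s j ∧ s j < 1 := fun j =>
    ⟨lt_of_lt_of_le h0a (hs j).1, lt_of_le_of_lt (hs j).2 hb1⟩
  constructor
  · intro i; exact mem _
  · intro i
    by_cases h : i = 0 <;> simp only [paramQ, h, if_pos, if_neg, ite_true, ite_false] <;>
      first
        | exact mem _
        | (rw [if_neg h]; exact mem _)

lemma G_coord (n : ℕ) (α : ℝ) (hα : 1 < α) {a b : ℝ} (h0a : 0 < a) (hab : a ≤ b) (hb1 : b < 1)
    (r : Fin (n+2) → ℝ) (hr : ∀ j, r j ∈ Set.Icc a b) (j : Fin (n+2)) :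
    ∃ t, (t = a ∨ t = b) ∧ Gfun n α r ≤ Gfun n α (Function.update r j t) := by
  rcases eq_or_lt_of_le hab with heq | hlt
  · -- a = b : r j = a already
    refine ⟨a, Or.inl rfl, ?_⟩
    have : r j = a := le_antisymm (heq ▸ (hr j).2) (hr j).1
    rw [← this, Function.update_eq_self]
  · set l := (b - r j)/(b-a) with hl_def
    set m' := (r j - a)/(b-a) with hm_def
    have hba : (0:ℝ) < b - a := by linarith
    have hne : b - a ≠ 0 := hba.ne'
    have hl : 0 ≤ l := div_nonneg (by linarith [(hr j).2]) hba.le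
    have hm : 0 ≤ m' := div_nonneg (by linarith [(hr j).1]) hba.le
    have hlm : l + m' = 1 := by rw [hl_def, hm_def]; field_simp; ring
    have hmix : l*a+m'*b = r j := by rw [hl_def, hm_def]; field_simp; ring
    -- memberships of the updated vectors
    have hupdate_mem : ∀ t, t ∈ Set.Icc a b → ∀ j', Function.update r j t j' ∈ Set.Icc a b := by
      intro t ht j'
      rw [Function.update_apply]
      split_ifs
      · exact ht
      · exact hr j'
    have hmema : ∀ j', Function.update r j a j' ∈ Set.Icc a b :=
      hupdate_mem a ⟨le_refl a, hab⟩
    have hmemb : ∀ j', Function.update r j b j' ∈ Set.Icc a b :=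
      hupdate_mem b ⟨hab, le_refl b⟩
    obtain ⟨hPa, hQa⟩ := param_props n h0a hb1 _ hmema
    obtain ⟨hPb, hQb⟩ := param_props n h0a hb1 _ hmemb
    obtain ⟨hPaPos, _, _⟩ := sumLaw_ber_props _ hPa
    obtain ⟨hQaPos, _, _⟩ := sumLaw_ber_props _ hQa
    obtain ⟨hPbPos, _, _⟩ := sumLaw_ber_props _ hPb
    obtain ⟨hQbPos, _, _⟩ := sumLaw_ber_props _ hQb
    -- convexity step
    have hGle : Gfun n α (Function.update r j (l*a+m'*b))
        ≤ l * Gfun n α (Function.update r j a) + m' * Gfun n α (Function.update r j b) := by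
      unfold Gfun
      rw [Finset.mul_sum, Finset.mul_sum, ← Finset.sum_add_distrib]
      apply Finset.sum_le_sum
      intro m hm'
      have hmle : m ≤ n + 1 := by
        have := Finset.mem_range.mp hm'
        omega
      have eqP := mix_shape (a := a) (b := b) (fun t => paramP n (Function.update r j t)) (dichP n r j) hlm m
      have eqQ := mix_shape (a := a) (b := b) (fun t => paramQ n (Function.update r j t)) (dichQ n r j) hlm m
      rw [eqP, eqQ]
      exact core_ineq α hα hl hm hlm (hPaPos m hmle) (hPbPos m hmle)
        (hQaPos m hmle) (hQbPos m hmle)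
    rw [hmix] at hGle
    rcases le_total (Gfun n α (Function.update r j a)) (Gfun n α (Function.update r j b)) with
      hc | hc
    · refine ⟨b, Or.inr rfl, ?_⟩
      have : Function.update r j (r j) = r := Function.update_eq_self j r
      calc Gfun n α r = Gfun n α (Function.update r j (r j)) := by rw [this]
      _ ≤ l * Gfun n α (Function.update r j a) + m' * Gfun n α (Function.update r j b) := hGle
      _ ≤ l * Gfun n α (Function.update r j b) + m' * Gfun n α (Function.update r j b) := by
          have := mul_le_mul_of_nonneg_left hc hl
          linarith
      _ = Gfun n α (Function.update r j b) := by rw [← add_mul, hlm, one_mul]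
    · refine ⟨a, Or.inl rfl, ?_⟩
      have : Function.update r j (r j) = r := Function.update_eq_self j r
      calc Gfun n α r = Gfun n α (Function.update r j (r j)) := by rw [this]
      _ ≤ l * Gfun n α (Function.update r j a) + m' * Gfun n α (Function.update r j b) := hGle
      _ ≤ l * Gfun n α (Function.update r j a) + m' * Gfun n α (Function.update r j a) := by
          have := mul_le_mul_of_nonneg_left hc hm
          linarith
      _ = Gfun n α (Function.update r j a) := by rw [← add_mul, hlm, one_mul]

lemma G_iterate (n : ℕ) (α : ℝ) (hα : 1 < α) {a b : ℝ} (h0a : 0 < a) (hab : a ≤ b) (hb1 : b < 1)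
    (r : Fin (n+2) → ℝ) (hr : ∀ j, r j ∈ Set.Icc a b) :
    ∀ K, K ≤ n + 2 → ∃ s : Fin (n+2) → ℝ, (∀ j, s j ∈ Set.Icc a b)
      ∧ (∀ j : Fin (n+2), (j:ℕ) < K → s j = a ∨ s j = b) ∧ Gfun n α r ≤ Gfun n α s := by
  intro K
  induction K with
  | zero => exact fun _ => ⟨r, hr, fun j hj => absurd hj (by omega), le_refl _⟩
  | succ K ih =>
    intro hK
    obtain ⟨s, hs, hext, hle⟩ := ih (by omega)
    obtain ⟨t, htab, hstep⟩ := G_coord n α hα h0a hab hb1 s hs ⟨K, by omega⟩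
    refine ⟨Function.update s ⟨K, by omega⟩ t, ?_, ?_, le_trans hle hstep⟩
    · intro j'
      rw [Function.update_apply]
      split_ifs
      · rcases htab with h | h <;> rw [h]
        · exact ⟨le_refl a, hab⟩
        · exact ⟨hab, le_refl b⟩
      · exact hs j'
    · intro j' hj'
      rw [Function.update_apply]
      split_ifs with h
      · exact htab
      · exact hext j' (by
          have : (j' : ℕ) ≠ K := fun hc => h (Fin.ext hc)
          omega)

/-- Extremal reduction: for `Xᵢ ~ Ber(pᵢ)` and `X'₁ ~ Ber(p'₁)` independent with
parameters in `[1/2−θ, 1/2+θ]`, the divergence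
`D_α(law(X₁+⋯+Xₙ) ‖ law(X'₁+X₂+⋯+Xₙ))` is bounded by the same divergence for
some parameter tuple whose entries all lie in `{1/2−θ, 1/2+θ}`. -/
theorem renyi_extremal_reduction
    (n : ℕ) (θ α : ℝ) (hθ0 : 0 ≤ θ) (hθ : θ ≤ 1/4) (hα : 1 < α)
    (p : Fin (n + 1) → ℝ) (p1' : ℝ)
    (hp : ∀ i, p i ∈ Set.Icc (1/2 - θ) (1/2 + θ))
    (hp1' : p1' ∈ Set.Icc (1/2 - θ) (1/2 + θ)) :
    ∃ (q : Fin (n + 1) → ℝ) (q1' : ℝ),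
      (∀ i, q i = 1/2 - θ ∨ q i = 1/2 + θ) ∧
      (q1' = 1/2 - θ ∨ q1' = 1/2 + θ) ∧
      renyiDiv α (sumLaw fun i => ber (p i))
          (sumLaw fun i => ber (Function.update p 0 p1' i))
        ≤ renyiDiv α (sumLaw fun i => ber (q i))
            (sumLaw fun i => ber (Function.update q 0 q1' i)) := by
  set a := 1/2 - θ with ha_def
  set b := 1/2 + θ with hb_def
  have h0a : 0 < a := by rw [ha_def]; linarith
  have hab : a ≤ b := by rw [ha_def, hb_def]; linarith
  have hb1 : b < 1 := by rw [hb_def]; linarith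
  have hα0 : (0:ℝ) < α := by linarith
  -- joint parameter vector
  set r : Fin (n+2) → ℝ := Fin.snoc p p1' with hr_def
  have hr : ∀ j, r j ∈ Set.Icc a b := by
    intro j
    induction j using Fin.lastCases with
    | last => rw [hr_def]; rw [Fin.snoc_last]; exact hp1'
    | cast i => rw [hr_def]; rw [Fin.snoc_castSucc]; exact hp i
  obtain ⟨s, hs, hext, hGle⟩ := G_iterate n α hα h0a hab hb1 r hr (n+2) (le_refl _)
  -- tsum = Gfun, for any admissible vector
  have key : ∀ v : Fin (n+2) → ℝ, (∀ j, v j ∈ Set.Icc a b) →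
      (∑' m, (sumLaw fun i => ber (paramP n v i)) m ^ α
          * (sumLaw fun i => ber (paramQ n v i)) m ^ (1-α)) = Gfun n α v := by
    intro v hv
    obtain ⟨hPmem, hQmem⟩ := param_props n h0a hb1 v hv
    obtain ⟨_, hPzero, _⟩ := sumLaw_ber_props _ hPmem
    apply tsum_eq_sum
    intro m hm
    have hnm : n + 1 < m := by
      by_contra hcon
      exact hm (Finset.mem_range.mpr (by omega))
    rw [hPzero m hnm, Real.zero_rpow (ne_of_gt hα0), zero_mul]
  -- positivity of Gfun on admissible vectors
  have Gpos : ∀ v : Fin (n+2) → ℝ, (∀ j, v j ∈ Set.Icc a b) → 0 < Gfun n α v := by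
    intro v hv
    obtain ⟨hPmem, hQmem⟩ := param_props n h0a hb1 v hv
    obtain ⟨hPpos, _, hPnn⟩ := sumLaw_ber_props _ hPmem
    obtain ⟨hQpos, _, hQnn⟩ := sumLaw_ber_props _ hQmem
    apply Finset.sum_pos'
    · intro m _
      exact mul_nonneg (Real.rpow_nonneg (hPnn m) _) (Real.rpow_nonneg (hQnn m) _)
    · refine ⟨0, Finset.mem_range.mpr (by omega), ?_⟩
      exact mul_pos (Real.rpow_pos_of_pos (hPpos 0 (by omega)) _)
        (Real.rpow_pos_of_pos (hQpos 0 (by omega)) _)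
  -- translate the statement's laws into param form
  have hPr : (fun i => ber (p i)) = (fun i => ber (paramP n r i)) := by
    funext i
    unfold paramP
    rw [hr_def, Fin.snoc_castSucc]
  have hQr : (fun i => ber (Function.update p 0 p1' i)) = (fun i => ber (paramQ n r i)) := by
    funext i
    unfold paramQ
    by_cases h : i = 0
    · subst h
      rw [Function.update_self, if_pos rfl, hr_def, Fin.snoc_last]
    · rw [Function.update_of_ne h, if_neg h, hr_def, Fin.snoc_castSucc]
  refine ⟨fun i => s i.castSucc, s (Fin.last (n+1)), ?_, ?_, ?_⟩
  · intro i
    exact hext i.castSucc (by omega)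
  · exact hext (Fin.last (n+1)) (by simp)
  · have hPs : (fun i => ber (s i.castSucc)) = (fun i => ber (paramP n s i)) := rfl
    have hQs : (fun i => ber (Function.update (fun i => s i.castSucc) 0
        (s (Fin.last (n+1))) i)) = (fun i => ber (paramQ n s i)) := by
      funext i
      unfold paramQ
      by_cases h : i = 0
      · subst h
        rw [Function.update_self, if_pos rfl]
      · rw [Function.update_of_ne h, if_neg h]
    rw [renyiDiv, renyiDiv, hPr, hQr, hPs, hQs, key r hr, key s hs]
    have hden : (0:ℝ) ≤ (α - 1)⁻¹ := inv_nonneg.mpr (by linarith)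
    exact mul_le_mul_of_nonneg_left (Real.log_le_log (Gpos r hr) hGle) hden
end

section
/- Conversion from RDP to approximate DP: if a mechanism satisfies (α, ε(α))-Rényi DP for all α > 1 and s := sup_{α>1} ε(α)/α < ∞, then for any δ ∈ (0,1) it satisfies (ε_DP, δ)-approximate DP with ε_DP ≤ s + 2√(s·log(1/δ)). -/
/-- Conversion from RDP to approximate DP: if `ε(α)/α ≤ s` for all `α > 1`
and `ε_DP` satisfies the standard RDP-to-DP conversion bound
`ε_DP ≤ ε(α) + log(1/δ)/(α−1)` for every `α > 1`, then
`ε_DP ≤ s + 2√(s·log(1/δ))`. -/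
theorem rdp_to_approx_dp
    (ε : ℝ → ℝ) (εDP s δ : ℝ)
    (hδ0 : 0 < δ) (hδ1 : δ < 1) (hs : 0 < s)
    (hsup : ∀ α : ℝ, 1 < α → ε α / α ≤ s)
    (hconv : ∀ α : ℝ, 1 < α → εDP ≤ ε α + Real.log (1/δ) / (α - 1)) :
    εDP ≤ s + 2 * Real.sqrt (s * Real.log (1/δ)) := by
  set L := Real.log (1/δ) with hL
  have hL0 : 0 < L := Real.log_pos (by rw [one_div]; exact (one_lt_inv₀ hδ0).mpr hδ1)
  set t := Real.sqrt (L / s) with ht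
  have ht0 : 0 < t := Real.sqrt_pos.mpr (div_pos hL0 hs)
  have hα : (1 : ℝ) < 1 + t := by linarith
  have h1 := hconv (1 + t) hα
  have h2 := hsup (1 + t) hα
  have hεα : ε (1 + t) ≤ s * (1 + t) := by
    have := (div_le_iff₀ (by linarith : (0:ℝ) < 1 + t)).mp h2
    linarith
  have ht2 : t ^ 2 = L / s := Real.sq_sqrt (le_of_lt (div_pos hL0 hs))
  have hst : s * t = Real.sqrt (s * L) := by
    rw [ht, show s * L = s ^ 2 * (L / s) by field_simp,
      Real.sqrt_mul (sq_nonneg s), Real.sqrt_sq hs.le]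
  have hLt : L / t = Real.sqrt (s * L) := by
    rw [div_eq_iff ht0.ne', ← hst]
    nlinarith [Real.sq_sqrt (mul_nonneg hs.le hL0.le), Real.sqrt_nonneg (s * L)]
  have h3 : εDP ≤ s * (1 + t) + L / t := by
    have he : (1 + t) - 1 = t := by ring
    rw [he] at h1
    linarith
  rw [hLt] at h3
  nlinarith
end
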